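/- Let e ≠ 0 be an error vector of Hamming weight |J| ≤ t/2 with transformed syndrome s_π(x) ≠ 0, and let σ(x), τ(x) be its error-locator and error-evaluator polynomials. Apply the extended Euclidean algorithm to G(x) = x^t and S(x) = s_π(x) to obtain sequences σ_i(x), τ_i(x) for i ∈ {−1, 0, …, κ+1}, and let ν := min{i ∈ {0, 1, …, κ+1} : deg τ_i(x) < t/2}. Then: (i) if deg σ_ν(x) < t/2, there exists μ ∈ 𝔽_{q^m} ∖ {0} such that σ(x) = μ σ_ν(x) and τ(x) = μ τ_ν(x); (ii) if t is even and deg σ_ν(x) = t/2, there exist μ_1, μ_2 ∈ 𝔽_{q^m} such that σ(x) = μ_1 σ_{ν−1}(x) + μ_2 σ_ν(x) and τ(x) = μ_1 τ_{ν−1}(x) + μ_2 τ_ν(x). Moreover, the case deg σ_ν(x) > t/2 cannot occur. -/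
import Mathlib


open Polynomial

attribute [local instance] Classical.propDecidable

variable {F : Type*} [Field F] {n : ℕ}

/-- The support `J` of an error vector `e`. -/
noncomputable def errSupp (e : Fin n → F) : Finset (Fin n) :=
  Finset.univ.filter fun i => e i ≠ 0

/-- The error-locator polynomial `σ(x) = Π_{i∈J} (x - α_i⁻¹)`. -/
noncomputable def errLoc (α e : Fin n → F) : F[X] :=
  ∏ i ∈ errSupp e, (X - C (α i)⁻¹)

/-- The scalar `A = η Σ_{i∈J} α_i^{t-1+t₁} g(α_i)⁻¹ e_i`. -/
noncomputable def twistScalar (α : Fin n → F) (g : F[X]) (t t₁ : ℕ) (η : F)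
    (e : Fin n → F) : F :=
  η * ∑ i ∈ errSupp e, α i ^ (t - 1 + t₁) * (g.eval (α i))⁻¹ * e i

/-- The error-evaluator polynomial
`τ(x) = A·σ(x) - Σ_{i∈J} α_i⁻¹ g(α_i)⁻¹ e_i Π_{j∈J∖{i}} (x - α_j⁻¹)`. -/
noncomputable def errEval (α : Fin n → F) (g : F[X]) (t t₁ : ℕ) (η : F)
    (e : Fin n → F) : F[X] :=
  C (twistScalar α g t t₁ η e) * errLoc α e -
    ∑ i ∈ errSupp e, C ((α i)⁻¹ * (g.eval (α i))⁻¹ * e i) *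
      ∏ j ∈ (errSupp e).erase i, (X - C (α j)⁻¹)

/-- The transformed syndrome polynomial
`s_π(x) = A + Σ_{i∈J} g(α_i)⁻¹ e_i Σ_{l=0}^{t-1} α_i^l x^l`. -/
noncomputable def synPoly (α : Fin n → F) (g : F[X]) (t t₁ : ℕ) (η : F)
    (e : Fin n → F) : F[X] :=
  C (twistScalar α g t t₁ η e) +
    ∑ i ∈ errSupp e, C ((g.eval (α i))⁻¹ * e i) *
      ∑ l ∈ Finset.range t, C (α i ^ l) * X ^ l


/-- Data produced by the extended Euclidean algorithm applied to polynomials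
`G` and `S` over a field, with `G ≠ 0` and `deg S < deg G`.  Indices are
shifted by one relative to the paper: `T k`, `U k`, `V k`, `Q k` correspond to
`τ_{k-1}`, `u_{k-1}`, `σ_{k-1}`, `q_{k-1}` respectively, so `T 0 = τ_{-1} = G`,
`T 1 = τ_0 = S`, etc.  `κ` is the largest (paper) index with `τ_κ ≠ 0`, i.e.
`T (κ+1) ≠ 0` and `T (κ+2) = 0`. -/
structure EEAData (F : Type*) [Field F] (G S : Polynomial F) where
  T : ℕ → Polynomial F
  U : ℕ → Polynomial F
  V : ℕ → Polynomial F
  Q : ℕ → Polynomial F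
  κ : ℕ
  hT0 : T 0 = G
  hT1 : T 1 = S
  hU0 : U 0 = 1
  hU1 : U 1 = 0
  hV0 : V 0 = 0
  hV1 : V 1 = 1
  hrec : ∀ k : ℕ, 2 ≤ k → k ≤ κ + 2 →
    T (k - 2) = Q k * T (k - 1) + T k ∧
    (T k).degree < (T (k - 1)).degree ∧
    U k = U (k - 2) - Q k * U (k - 1) ∧
    V k = V (k - 2) - Q k * V (k - 1)
  hκ₁ : T (κ + 1) ≠ 0
  hκ₂ : T (κ + 2) = 0


section Helpers
variable {F : Type*} [Field F] {n : ℕ}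

lemma mem_errSupp {e : Fin n → F} {i : Fin n} (hi : i ∈ errSupp e) : e i ≠ 0 := by
  simpa [errSupp] using hi

lemma geom_aux (a : F) (ha : a ≠ 0) {t : ℕ} (ht : 1 ≤ t) :
    (X - C a⁻¹) * ∑ l ∈ Finset.range t, C (a ^ l) * X ^ l
      = C (a ^ (t - 1)) * X ^ t - C a⁻¹ := by
  have h1 : ∑ l ∈ Finset.range t, C (a ^ l) * X ^ l = ∑ l ∈ Finset.range t, (C a * X) ^ l := by
    refine Finset.sum_congr rfl fun l _ => ?_
    rw [mul_pow, ← C_pow]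
  have hg := geom_sum_mul (C a * X) t
  have h3 : a⁻¹ * a ^ t = a ^ (t - 1) := by
    nth_rewrite 1 [show t = (t-1) + 1 by omega]
    rw [pow_succ]; field_simp
  have h2 : (X - C a⁻¹) = C a⁻¹ * (C a * X - 1) := by
    rw [mul_sub, ← mul_assoc, ← C_mul, inv_mul_cancel₀ ha]; simp
  calc (X - C a⁻¹) * ∑ l ∈ Finset.range t, C (a ^ l) * X ^ l
      = C a⁻¹ * ((∑ l ∈ Finset.range t, (C a * X) ^ l) * (C a * X - 1)) := by
        rw [h1, h2]; ring
    _ = C a⁻¹ * ((C a * X) ^ t - 1) := by rw [hg]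
    _ = C (a ^ (t - 1)) * X ^ t - C a⁻¹ := by
        rw [mul_pow, ← C_pow, mul_sub, ← mul_assoc, ← C_mul, h3, mul_one]

lemma key_eq (α : Fin n → F) (hα0 : ∀ i, α i ≠ 0) (g : F[X]) (t t₁ : ℕ) (ht : 1 ≤ t)
    (η : F) (e : Fin n → F) :
    errLoc α e * synPoly α g t t₁ η e - errEval α g t t₁ η e =
      X ^ t * ∑ i ∈ errSupp e, C ((g.eval (α i))⁻¹ * e i * α i ^ (t - 1)) *
        ∏ j ∈ (errSupp e).erase i, (X - C (α j)⁻¹) := by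
  have hsplit : ∀ (A B Cc : F[X]), errLoc α e * (A + B) - (A * errLoc α e - Cc)
      = errLoc α e * B + Cc := by intros; ring
  rw [errEval, synPoly, hsplit, Finset.mul_sum, Finset.mul_sum, ← Finset.sum_add_distrib]
  refine Finset.sum_congr rfl fun i hi => ?_
  have hσ : errLoc α e = (X - C (α i)⁻¹) * ∏ j ∈ (errSupp e).erase i, (X - C (α j)⁻¹) := by
    rw [errLoc, ← Finset.mul_prod_erase _ _ hi]
  have hg := geom_aux (α i) (hα0 i) ht
  rw [hσ]
  simp only [C_mul]
  linear_combination (C ((eval (α i) g)⁻¹) * C (e i) *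
    ∏ j ∈ (errSupp e).erase i, (X - C (α j)⁻¹)) * hg

lemma errEval_eval_ne_zero (α : Fin n → F) (hα : Function.Injective α)
    (hα0 : ∀ i, α i ≠ 0) (g : F[X]) (t t₁ : ℕ) (η : F)
    (hgα : ∀ i, g.eval (α i) ≠ 0) (e : Fin n → F) {i : Fin n} (hi : i ∈ errSupp e) :
    (errEval α g t t₁ η e).eval (α i)⁻¹ ≠ 0 := by
  have hroot : (errLoc α e).eval (α i)⁻¹ = 0 := by
    rw [errLoc, eval_prod]
    exact Finset.prod_eq_zero hi (by simp)
  have hsum : ∑ k ∈ errSupp e, ((α k)⁻¹ * (g.eval (α k))⁻¹ * e k) *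
        ∏ j ∈ (errSupp e).erase k, ((α i)⁻¹ - (α j)⁻¹)
      = ((α i)⁻¹ * (g.eval (α i))⁻¹ * e i) *
        ∏ j ∈ (errSupp e).erase i, ((α i)⁻¹ - (α j)⁻¹) := by
    refine Finset.sum_eq_single_of_mem i hi fun k hk hki => ?_
    have : i ∈ (errSupp e).erase k := Finset.mem_erase.mpr ⟨(Ne.symm hki), hi⟩
    rw [Finset.prod_eq_zero this (by simp), mul_zero]
  rw [errEval]
  simp only [eval_sub, eval_mul, eval_C, hroot, mul_zero, eval_finset_sum, eval_mul, eval_C,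
    eval_prod, eval_sub, eval_X, zero_sub, neg_ne_zero]
  rw [hsum]
  refine mul_ne_zero (mul_ne_zero (mul_ne_zero (inv_ne_zero (hα0 i)) (inv_ne_zero (hgα i)))
    (mem_errSupp hi)) (Finset.prod_ne_zero_iff.mpr fun j hj => ?_)
  obtain ⟨hji, hjJ⟩ := Finset.mem_erase.mp hj
  have : α i ≠ α j := fun h => hji (hα h).symm
  intro hc
  rw [sub_eq_zero] at hc
  exact this (inv_injective hc)

lemma coprime_errLoc_errEval (α : Fin n → F) (hα : Function.Injective α)
    (hα0 : ∀ i, α i ≠ 0) (g : F[X]) (t t₁ : ℕ) (η : F)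
    (hgα : ∀ i, g.eval (α i) ≠ 0) (e : Fin n → F) :
    IsCoprime (errLoc α e) (errEval α g t t₁ η e) := by
  rw [errLoc]
  refine IsCoprime.prod_left fun i hi => ?_
  rw [(irreducible_X_sub_C ((α i)⁻¹)).coprime_iff_not_dvd, dvd_iff_isRoot]
  exact fun h => errEval_eval_ne_zero α hα hα0 g t t₁ η hgα e hi h

lemma errLoc_natDegree (α e : Fin n → F) :
    (errLoc α e).natDegree = (errSupp e).card := by
  rw [errLoc, natDegree_prod _ _ (fun i _ => X_sub_C_ne_zero _)]
  simp [natDegree_X_sub_C]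

lemma errLoc_ne_zero (α e : Fin n → F) : errLoc α e ≠ 0 := by
  rw [errLoc]
  exact Finset.prod_ne_zero_iff.mpr fun i _ => X_sub_C_ne_zero _

lemma errEval_natDegree_le (α : Fin n → F) (g : F[X]) (t t₁ : ℕ) (η : F) (e : Fin n → F) :
    (errEval α g t t₁ η e).natDegree ≤ (errSupp e).card := by
  rw [errEval]
  refine (natDegree_sub_le _ _).trans (max_le ?_ ?_)
  · exact (natDegree_C_mul_le _ _).trans (errLoc_natDegree α e).le
  · refine natDegree_sum_le_of_forall_le _ _ fun i hi => ?_
    refine (natDegree_C_mul_le _ _).trans ?_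
    rw [natDegree_prod _ _ (fun j _ => X_sub_C_ne_zero _)]
    simp only [natDegree_X_sub_C, Finset.sum_const, smul_eq_mul, mul_one]
    exact (Finset.card_erase_le).trans le_rfl

lemma synPoly_natDegree_le (α : Fin n → F) (g : F[X]) (t t₁ : ℕ) (ht : 1 ≤ t) (η : F)
    (e : Fin n → F) : (synPoly α g t t₁ η e).natDegree ≤ t - 1 := by
  rw [synPoly]
  refine (natDegree_add_le _ _).trans (max_le (by simp) ?_)
  refine natDegree_sum_le_of_forall_le _ _ fun i hi => ?_
  refine (natDegree_C_mul_le _ _).trans ?_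
  refine natDegree_sum_le_of_forall_le _ _ fun l hl => ?_
  refine (natDegree_C_mul_le _ _).trans ?_
  rw [natDegree_X_pow]
  exact Nat.le_sub_one_of_lt (Finset.mem_range.mp hl)

namespace EEAData
variable {G S : F[X]} (E : EEAData F G S)

lemma T_ne_zero (hG : G ≠ 0) : ∀ k ≤ E.κ + 1, E.T k ≠ 0 := by
  intro k hk
  match k with
  | 0 => rw [E.hT0]; exact hG
  | (m+1) =>
    obtain ⟨-, hdeg, -, -⟩ := E.hrec (m+2) (by omega) (by omega)
    intro h0
    rw [show m+2-1 = m+1 from rfl, h0, degree_zero] at hdeg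
    exact (not_lt_bot hdeg)

lemma deg_lt (hS : S.degree < G.degree) : ∀ k, 1 ≤ k → k ≤ E.κ + 2 →
    (E.T k).degree < (E.T (k-1)).degree := by
  intro k h1 h2
  match k with
  | 1 => rw [E.hT0, E.hT1]; exact hS
  | (m+2) => exact (E.hrec (m+2) (by omega) h2).2.1

lemma TUV : ∀ k ≤ E.κ + 2, E.T k = E.U k * G + E.V k * S := by
  intro k
  induction k using Nat.strong_induction_on with
  | _ k ih =>
    match k with
    | 0 => intro _; rw [E.hT0, E.hU0, E.hV0]; ring
    | 1 => intro _; rw [E.hT1, E.hU1, E.hV1]; ring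
    | (m+2) =>
      intro hk
      obtain ⟨hT, -, hU, hV⟩ := E.hrec (m+2) (by omega) hk
      have h0 := ih m (by omega) (by omega)
      have h1 := ih (m+1) (by omega) (by omega)
      rw [show m+2-2 = m from rfl, show m+2-1 = m+1 from rfl] at hT hU hV
      have : E.T (m+2) = E.T m - E.Q (m+2) * E.T (m+1) := by rw [hT]; ring
      rw [this, hU, hV, h0, h1]; ring

lemma det : ∀ k, k + 1 ≤ E.κ + 2 →
    E.T k * E.V (k+1) - E.T (k+1) * E.V k = (-1)^k * G := by
  intro k
  induction k with
  | zero => intro _; rw [E.hT0, E.hV0, E.hV1]; ring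
  | succ m ih =>
    intro hk
    obtain ⟨hT, -, -, hV⟩ := E.hrec (m+2) (by omega) (by omega)
    rw [show m+2-2 = m from rfl, show m+2-1 = m+1 from rfl] at hT hV
    have hT' : E.T (m+2) = E.T m - E.Q (m+2) * E.T (m+1) := by rw [hT]; ring
    have := ih (by omega)
    rw [hT', hV]
    calc E.T (m+1) * (E.V m - E.Q (m+2) * E.V (m+1)) -
          (E.T m - E.Q (m+2) * E.T (m+1)) * E.V (m+1)
        = -(E.T m * E.V (m+1) - E.T (m+1) * E.V m) := by ring
      _ = (-1)^(m+1) * G := by rw [this]; ring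

lemma Vdeg (hG : G ≠ 0) (hS : S.degree < G.degree) : ∀ k, 1 ≤ k → k ≤ E.κ + 2 →
    E.V k ≠ 0 ∧ (E.V k).natDegree + (E.T (k-1)).natDegree = G.natDegree ∧
      (E.V (k-1)).degree < (E.V k).degree := by
  intro k h1
  induction k, h1 using Nat.le_induction with
  | base =>
    intro _
    refine ⟨by rw [E.hV1]; exact one_ne_zero, ?_, ?_⟩
    · rw [E.hV1, E.hT0]; simp
    · rw [E.hV0, E.hV1]; simp [degree_one]
  | succ m hm ih =>
    intro h2
    obtain ⟨hVm, hsum, hVlt⟩ := ih (by omega)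
    obtain ⟨hT, hdlt2, -, hV⟩ := E.hrec (m+1) (by omega) h2
    simp only [show m+1-2 = m-1 from by omega, Nat.add_sub_cancel] at hT hV hdlt2 ⊢
    have hTm : E.T m ≠ 0 := E.T_ne_zero hG m (by omega)
    have hTm1 : E.T (m-1) ≠ 0 := E.T_ne_zero hG (m-1) (by omega)
    have hdlt : (E.T m).degree < (E.T (m-1)).degree := by
      have := E.deg_lt hS m (by omega) (by omega)
      exact this
    have hQ : E.Q (m+1) ≠ 0 := by
      intro h0
      rw [h0, zero_mul, zero_add] at hT
      rw [← hT] at hdlt2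
      exact absurd (hdlt2.trans hdlt) (lt_irrefl _)
    have hQT : E.Q (m+1) * E.T m = E.T (m-1) - E.T (m+1) := by rw [hT]; ring
    have hdegQT : (E.Q (m+1) * E.T m).degree = (E.T (m-1)).degree := by
      rw [hQT, degree_sub_eq_left_of_degree_lt (hdlt2.trans hdlt)]
    have hQdeg : (E.Q (m+1)).natDegree + (E.T m).natDegree = (E.T (m-1)).natDegree := by
      have h4 := natDegree_mul hQ hTm
      rw [← h4, natDegree_eq_of_degree_eq hdegQT]
    have hQpos : 1 ≤ (E.Q (m+1)).natDegree := by
      have h3 : (E.T m).natDegree < (E.T (m-1)).natDegree := natDegree_lt_natDegree hTm hdlt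
      omega
    have hQVne : E.Q (m+1) * E.V m ≠ 0 := mul_ne_zero hQ hVm
    have hQVdeg : (E.V m).degree < (E.Q (m+1) * E.V m).degree := by
      rw [← natDegree_lt_natDegree_iff hVm]
      rw [natDegree_mul hQ hVm]
      omega
    have hVdeg : (E.V (m+1)).degree = (E.Q (m+1) * E.V m).degree := by
      rw [hV, degree_sub_eq_right_of_degree_lt (hVlt.trans hQVdeg)]
    have hVne : E.V (m+1) ≠ 0 := by
      intro h0
      rw [h0, degree_zero] at hVdeg
      exact hQVne (degree_eq_bot.mp hVdeg.symm)
    refine ⟨hVne, ?_, by rw [hVdeg]; exact hQVdeg⟩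
    have h5 : (E.V (m+1)).natDegree = (E.Q (m+1)).natDegree + (E.V m).natDegree := by
      rw [natDegree_eq_of_degree_eq hVdeg, natDegree_mul hQ hVm]
    omega

end EEAData
end Helpers


lemma eea_recover {F : Type*} [Field F] {S : Polynomial F} {t : ℕ} (ht : 1 ≤ t)
    (E : EEAData F (X ^ t) S) (σ τ : F[X]) (w : ℕ)
    (hdσ : σ.natDegree = w) (hw1 : 1 ≤ w) (hw : 2 * w ≤ t)
    (hdτ : τ.natDegree ≤ w)
    (hSdeg : S.degree < (X ^ t : F[X]).degree)
    (hkey : ∃ u : F[X], σ * S - τ = X ^ t * u)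
    (hcop : IsCoprime σ τ)
    (N : ℕ)
    (hNlt : 2 * (E.T N).natDegree < t)
    (hNleast : ∀ k < N, ¬ 2 * (E.T k).natDegree < t) :
    (2 * (E.V N).natDegree < t →
      ∃ μ : F, μ ≠ 0 ∧ σ = C μ * E.V N ∧ τ = C μ * E.T N) ∧
    (2 * (E.V N).natDegree = t →
      ∃ μ₁ μ₂ : F,
        σ = C μ₁ * E.V (N - 1) + C μ₂ * E.V N ∧
        τ = C μ₁ * E.T (N - 1) + C μ₂ * E.T N) ∧
    ¬ t < 2 * (E.V N).natDegree := by
  have hXt : (X ^ t : F[X]) ≠ 0 := pow_ne_zero t X_ne_zero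
  have hGnd : (X ^ t : F[X]).natDegree = t := natDegree_X_pow t
  have hN1 : 1 ≤ N := by
    rcases Nat.eq_zero_or_pos N with h | h
    · exfalso; rw [h, E.hT0, hGnd] at hNlt; omega
    · exact h
  have hNκ : N ≤ E.κ + 2 := by
    by_contra h
    have h2 := hNleast (E.κ + 2) (by omega)
    rw [E.hκ₂] at h2
    simp only [natDegree_zero, mul_zero] at h2
    omega
  have hTN1 : t ≤ 2 * (E.T (N - 1)).natDegree := by
    have := hNleast (N - 1) (by omega)
    omega
  obtain ⟨hVNne, hVNdeg, hVNlt⟩ := E.Vdeg hXt hSdeg N hN1 hNκ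
  rw [hGnd] at hVNdeg
  obtain ⟨u, hu⟩ := hkey
  have hE2N : E.T N = E.U N * X ^ t + E.V N * S := E.TUV N hNκ
  have hE2N1 : E.T (N - 1) = E.U (N - 1) * X ^ t + E.V (N - 1) * S :=
    E.TUV (N - 1) (by omega)
  set ε : F := (-1 : F) ^ (N - 1) with hεdef
  have hε : ε * ε = 1 := by
    rw [hεdef, ← pow_add]
    exact Even.neg_one_pow ⟨N - 1, rfl⟩
  have hdet : E.T (N - 1) * E.V N - E.T N * E.V (N - 1) = C ε * X ^ t := by
    have h1 := E.det (N - 1) (by omega)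
    rw [show N - 1 + 1 = N from by omega] at h1
    rw [h1, hεdef, map_pow, map_neg, map_one]
  set a' : F[X] := σ * E.U N + E.V N * u with ha'def
  set b' : F[X] := σ * E.U (N - 1) + E.V (N - 1) * u with hb'def
  have ha' : σ * E.T N - τ * E.V N = X ^ t * a' := by
    rw [ha'def]; linear_combination σ * hE2N + E.V N * hu
  have hb' : σ * E.T (N - 1) - τ * E.V (N - 1) = X ^ t * b' := by
    rw [hb'def]; linear_combination σ * hE2N1 + E.V (N - 1) * hu
  set aa : F[X] := -(C ε * a') with haadef
  set bb : F[X] := C ε * b' with hbbdef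
  have hCε : C ε * C ε = 1 := by rw [← C_mul, hε, C_1]
  have hσab : σ = aa * E.V (N - 1) + bb * E.V N := by
    have hc : X ^ t * (aa * E.V (N - 1) + bb * E.V N) = X ^ t * σ := by
      rw [haadef, hbbdef]
      linear_combination (-(C ε * E.V N)) * hb' + (C ε * E.V (N - 1)) * ha' +
        (C ε * σ) * hdet + (σ * X ^ t) * hCε
    exact (mul_left_cancel₀ hXt hc).symm
  have hτab : τ = aa * E.T (N - 1) + bb * E.T N := by
    have hc : X ^ t * (aa * E.T (N - 1) + bb * E.T N) = X ^ t * τ := by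
      rw [haadef, hbbdef]
      linear_combination (-(C ε * E.T N)) * hb' + (C ε * E.T (N - 1)) * ha' +
        (C ε * τ) * hdet + (τ * X ^ t) * hCε
    exact (mul_left_cancel₀ hXt hc).symm
  have haX : X ^ t * aa = C ε * (τ * E.V N) - C ε * (σ * E.T N) := by
    rw [haadef]; linear_combination (C ε) * ha'
  have haXdeg : (X ^ t * aa).natDegree ≤
      max (τ.natDegree + (E.V N).natDegree) (σ.natDegree + (E.T N).natDegree) := by
    rw [haX]
    refine (natDegree_sub_le _ _).trans (max_le_max ?_ ?_)
    · exact (natDegree_C_mul_le _ _).trans (natDegree_mul_le)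
    · exact (natDegree_C_mul_le _ _).trans (natDegree_mul_le)
  have hana : aa ≠ 0 → t + aa.natDegree ≤
      max (τ.natDegree + (E.V N).natDegree) (σ.natDegree + (E.T N).natDegree) := by
    intro h
    have := natDegree_mul hXt h
    rw [hGnd] at this
    omega
  refine ⟨?_, ?_, ?_⟩
  · intro hcase
    have haa0 : aa = 0 := by
      by_contra h
      have h1 := hana h
      omega
    rw [haa0, zero_mul, zero_add] at hσab hτab
    have hbbunit : IsUnit bb :=
      hcop.isUnit_of_dvd' ⟨E.V N, hσab⟩ ⟨E.T N, hτab⟩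
    obtain ⟨r, hr, hrC⟩ := Polynomial.isUnit_iff.mp hbbunit
    exact ⟨r, hr.ne_zero, by rw [hσab, hrC], by rw [hτab, hrC]⟩
  · intro hcase
    have haaC : aa = C (aa.coeff 0) := by
      rcases eq_or_ne aa 0 with h | h
      · simp [h]
      · refine eq_C_of_natDegree_eq_zero ?_
        have h1 := hana h
        omega
    have hbbC : bb = C (bb.coeff 0) := by
      rcases eq_or_ne bb 0 with h | h
      · simp [h]
      · refine eq_C_of_natDegree_eq_zero ?_
        have h1 : bb * E.V N = σ - aa * E.V (N - 1) := by
          rw [hσab]; ring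
        have h2 : (bb * E.V N).natDegree = bb.natDegree + (E.V N).natDegree :=
          natDegree_mul h hVNne
        have h3 : (σ - aa * E.V (N - 1)).natDegree ≤
            max σ.natDegree (E.V (N - 1)).natDegree := by
          refine (natDegree_sub_le _ _).trans (max_le_max le_rfl ?_)
          rw [haaC]
          exact natDegree_C_mul_le _ _
        have h4 : (E.V (N - 1)).natDegree ≤ (E.V N).natDegree :=
          natDegree_le_natDegree hVNlt.le
        rw [h1] at h2
        omega
    exact ⟨aa.coeff 0, bb.coeff 0, by rw [hσab, ← haaC, ← hbbC],
      by rw [hτab, ← haaC, ← hbbC]⟩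
  · intro h
    omega

/-- decoding via the extended Euclidean algorithm.  Apply the EEA
to `G = x^t`, `S = s_π`, and let `N` be the least (shifted) index with
`deg τ_N < t/2` (encoded as `2 * deg (T N) < t`).  Then:
(i) if `deg σ_N < t/2` there is a nonzero `μ` with `σ = μ σ_N`, `τ = μ τ_N`;
(ii) if `t` is even and `deg σ_N = t/2` there are `μ₁, μ₂` with
`σ = μ₁ σ_{N-1} + μ₂ σ_N` and `τ = μ₁ τ_{N-1} + μ₂ τ_N`;
(iii) the case `deg σ_N > t/2` cannot occur. -/

theorem stmt11 [Fintype F] (K : Subfield F) (α : Fin n → F)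
    (hα : Function.Injective α) (hα0 : ∀ i, α i ≠ 0)
    (g : F[X]) (t : ℕ) (ht : 1 ≤ t) (hgdeg : g.natDegree = t)
    (hgα : ∀ i, g.eval (α i) ≠ 0) (t₁ : ℕ) (ht₁ : 1 ≤ t₁) (η : F)
    (e : Fin n → F) (heK : ∀ i, e i ∈ K) (he : e ≠ 0)
    (hw : 2 * (errSupp e).card ≤ t)
    (hsπ : synPoly α g t t₁ η e ≠ 0)
    (E : EEAData F (X ^ t) (synPoly α g t t₁ η e))
    (N : ℕ)
    (hNlt : 2 * (E.T N).natDegree < t)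
    (hNleast : ∀ k < N, ¬ 2 * (E.T k).natDegree < t) :
    (2 * (E.V N).natDegree < t →
      ∃ μ : F, μ ≠ 0 ∧ errLoc α e = C μ * E.V N ∧
        errEval α g t t₁ η e = C μ * E.T N) ∧
    (Even t → 2 * (E.V N).natDegree = t →
      ∃ μ₁ μ₂ : F,
        errLoc α e = C μ₁ * E.V (N - 1) + C μ₂ * E.V N ∧
        errEval α g t t₁ η e = C μ₁ * E.T (N - 1) + C μ₂ * E.T N) ∧
    ¬ t < 2 * (E.V N).natDegree := by
  have hw1 : 1 ≤ (errSupp e).card := by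
    refine Finset.card_pos.mpr ?_
    obtain ⟨i, hi⟩ := Function.ne_iff.mp he
    refine ⟨i, ?_⟩
    simp only [errSupp, Finset.mem_filter, Finset.mem_univ, true_and]
    simpa using hi
  have hSdeg : (synPoly α g t t₁ η e).degree < (X ^ t : F[X]).degree := by
    have h1 := synPoly_natDegree_le α g t t₁ ht η e
    have h2 : (synPoly α g t t₁ η e).degree ≤ ((t - 1 : ℕ) : WithBot ℕ) :=
      natDegree_le_iff_degree_le.mp h1
    refine h2.trans_lt ?_
    rw [degree_X_pow]
    exact_mod_cast (by omega : t - 1 < t)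
  obtain ⟨h1, h2, h3⟩ := eea_recover ht E (errLoc α e) (errEval α g t t₁ η e)
    (errSupp e).card (errLoc_natDegree α e) hw1 hw
    (errEval_natDegree_le α g t t₁ η e) hSdeg
    ⟨_, key_eq α hα0 g t t₁ ht η e⟩
    (coprime_errLoc_errEval α hα hα0 g t t₁ η hgα e) N hNlt hNleast
  exact ⟨h1, fun _ => h2, h3⟩
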